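/- arXiv:2404.13731 — 2 statements merged into one kernel-verified Lean document; each statement's English description precedes it below -/
import Mathlib

section
/- Under uniform stability with constant c_{n−1} and the bi-Lipschitz parametrization with constants κ₁ > 0 and κ₂ < ∞, the maximum over i ∈ [n] of ‖μ_{β̂₋ᵢ} − μ_{β̄₋₁}‖_∞ satisfies, for every ε > 0, P( max_i ‖μ_{β̂₋ᵢ} − μ_{β̄₋₁}‖_∞ ≥ ε ) ≤ 2p·exp( −(2κ₁²/n)·( ε/(κ₂ c_{n−1}) − 1/κ₁ )² ), provided ε/(κ₂ c_{n−1}) ≥ 1/κ₁. -/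
open MeasureTheory ProbabilityTheory BoundedContinuousFunction Real


lemma key_ineq {p : ℝ} (hp0 : 0 ≤ p) (hp1 : p ≤ 1) (u : ℝ) :
    (1-p) * Real.exp (-p*u) + p * Real.exp ((1-p)*u) ≤ Real.exp (u^2/8) := by
  have hD : ∀ v : ℝ, 0 < 1 - p + p * Real.exp v := by
    intro v
    rcases eq_or_lt_of_le hp0 with h | h
    · simp [← h]
    · have := Real.exp_pos v
      nlinarith
  set ψ : ℝ → ℝ := fun v => v^2/8 + p*v - Real.log (1 - p + p * Real.exp v) with hψ
  set ψ' : ℝ → ℝ := fun v => v/4 + p - p * Real.exp v / (1 - p + p * Real.exp v) with hψ'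
  have hd1 : ∀ v, HasDerivAt ψ (ψ' v) v := by
    intro v
    have h1 : HasDerivAt (fun v : ℝ => 1 - p + p * Real.exp v) (p * Real.exp v) v := by
      simpa using (((Real.hasDerivAt_exp v).const_mul p).const_add (1-p))
    have h2 : HasDerivAt (fun v : ℝ => Real.log (1 - p + p * Real.exp v))
        (p * Real.exp v / (1 - p + p * Real.exp v)) v := h1.log (hD v).ne'
    have h3 : HasDerivAt (fun v : ℝ => v^2/8 + p*v) (v/4 + p) v := by
      have := ((hasDerivAt_pow 2 v).div_const 8).add ((hasDerivAt_id v).const_mul p)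
      refine this.congr_deriv ?_
      ring
    exact h3.sub h2
  have hd2 : ∀ v, HasDerivAt ψ' (1/4 - p * Real.exp v * (1-p) / (1 - p + p * Real.exp v)^2) v := by
    intro v
    have h1 : HasDerivAt (fun v : ℝ => 1 - p + p * Real.exp v) (p * Real.exp v) v := by
      simpa using (((Real.hasDerivAt_exp v).const_mul p).const_add (1-p))
    have h2 : HasDerivAt (fun v : ℝ => p * Real.exp v) (p * Real.exp v) v :=
      (Real.hasDerivAt_exp v).const_mul p
    have h3 := (h2.div h1 (hD v).ne')
    have h4 : HasDerivAt (fun v : ℝ => v/4 + p) (1/4 : ℝ) v := by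
      simpa using ((hasDerivAt_id v).div_const 4).add_const p
    have h5 := h4.sub h3
    refine h5.congr_deriv ?_
    have := (hD v).ne'
    field_simp
    ring
  have hψ'' : ∀ v, 0 ≤ 1/4 - p * Real.exp v * (1-p) / (1 - p + p * Real.exp v)^2 := by
    intro v
    rw [sub_nonneg, div_le_iff₀ (pow_pos (hD v) 2)]
    nlinarith [sq_nonneg (1 - p - p * Real.exp v), Real.exp_pos v]
  have hmono' : Monotone ψ' := by
    apply monotone_of_deriv_nonneg (fun v => (hd2 v).differentiableAt)
    intro v
    rw [(hd2 v).deriv]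
    exact hψ'' v
  have hψ'0 : ψ' 0 = 0 := by simp [hψ']
  have hψ0 : ψ 0 = 0 := by simp [hψ]
  have hcont : Continuous ψ := by
    have : Differentiable ℝ ψ := fun v => (hd1 v).differentiableAt
    exact this.continuous
  have hψnn : ∀ v, 0 ≤ ψ v := by
    intro v
    rcases le_total 0 v with h | h
    · have hm : MonotoneOn ψ (Set.Ici 0) := by
        apply monotoneOn_of_deriv_nonneg (convex_Ici 0) hcont.continuousOn
          (fun x _ => (hd1 x).differentiableAt.differentiableWithinAt)
        intro x hx
        rw [(hd1 x).deriv, ← hψ'0]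
        exact hmono' (le_of_lt (by simpa using hx))
      have := hm (Set.self_mem_Ici) (by exact h) h
      simpa [hψ0] using this
    · have hm : AntitoneOn ψ (Set.Iic 0) := by
        apply antitoneOn_of_deriv_nonpos (convex_Iic 0) hcont.continuousOn
          (fun x _ => (hd1 x).differentiableAt.differentiableWithinAt)
        intro x hx
        rw [(hd1 x).deriv, ← hψ'0]
        exact hmono' (le_of_lt (by simpa using hx))
      have := hm (by exact h) Set.self_mem_Iic h
      simpa [hψ0] using this
  have hlog := hψnn u
  have key : 1 - p + p * Real.exp u ≤ Real.exp (u^2/8 + p*u) := by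
    have h1 : Real.log (1 - p + p * Real.exp u) ≤ u^2/8 + p*u := by
      simp only [hψ] at hlog; linarith
    calc 1 - p + p * Real.exp u = Real.exp (Real.log (1 - p + p * Real.exp u)) :=
          (Real.exp_log (hD u)).symm
      _ ≤ _ := Real.exp_le_exp.2 h1
  calc (1-p) * Real.exp (-p*u) + p * Real.exp ((1-p)*u)
      = Real.exp (-(p*u)) * (1 - p + p * Real.exp u) := by
        rw [mul_add, mul_comm (Real.exp (-(p*u))) (p * Real.exp u), mul_assoc,
          ← Real.exp_add]
        ring_nf
    _ ≤ Real.exp (-(p*u)) * Real.exp (u^2/8 + p*u) := by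
        exact mul_le_mul_of_nonneg_left key (Real.exp_pos _).le
    _ = Real.exp (u^2/8) := by rw [← Real.exp_add]; ring_nf



lemma hoeffding_lemma {α : Type*} [MeasurableSpace α] (ν : Measure α)
    [IsProbabilityMeasure ν] {X : α → ℝ} (hX : Measurable X) {a b : ℝ}
    (hab : ∀ x, X x ∈ Set.Icc a b) (h0 : ∫ x, X x ∂ν = 0) (s : ℝ) :
    ∫ x, Real.exp (s * X x) ∂ν ≤ Real.exp (s^2*(b-a)^2/8) := by
  have hint : Integrable X ν := by
    refine (integrable_const (|a| + |b|)).mono' hX.aestronglyMeasurable (ae_of_all _ ?_)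
    intro x
    have h1 := (hab x).1; have h2 := (hab x).2
    rw [Real.norm_eq_abs]
    cases abs_cases a <;> cases abs_cases b <;> cases abs_cases (X x) <;> linarith
  have hexpint : Integrable (fun x => Real.exp (s * X x)) ν := by
    refine (integrable_const (Real.exp (|s| * (|a| + |b|)))).mono'
      ((hX.const_mul s).exp.aestronglyMeasurable) (ae_of_all _ ?_)
    intro x
    rw [Real.norm_eq_abs, abs_of_pos (Real.exp_pos _), Real.exp_le_exp]
    have h1 := (hab x).1; have h2 := (hab x).2
    have hXb : |X x| ≤ |a| + |b| := by
      cases abs_cases a <;> cases abs_cases b <;> cases abs_cases (X x) <;> linarith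
    calc s * X x ≤ |s * X x| := le_abs_self _
      _ = |s| * |X x| := abs_mul s (X x)
      _ ≤ |s| * (|a| + |b|) := by
          exact mul_le_mul_of_nonneg_left hXb (abs_nonneg s)
  -- α nonempty
  have hne : Nonempty α := by
    by_contra h
    rw [not_nonempty_iff] at h
    have h1 : (ν Set.univ) = 1 := measure_univ
    rw [Set.eq_empty_of_isEmpty Set.univ, measure_empty] at h1
    exact zero_ne_one h1
  obtain ⟨x₀⟩ := hne
  have hle : a ≤ b := le_trans (hab x₀).1 (hab x₀).2
  have ha0 : a ≤ 0 := by
    have : a = ∫ _, a ∂ν := by simp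
    rw [this, ← h0]
    exact integral_mono (integrable_const a) hint (fun x => (hab x).1)
  have hb0 : 0 ≤ b := by
    have : b = ∫ _, b ∂ν := by simp
    rw [this, ← h0]
    exact integral_mono hint (integrable_const b) (fun x => (hab x).2)
  rcases eq_or_lt_of_le hle with heq | hlt
  · -- a = b forces a = 0, X ≡ 0
    have ha : a = 0 := le_antisymm ha0 (heq ▸ hb0)
    have hb : b = 0 := by rw [← heq]; exact ha
    have hXz : ∀ x, X x = 0 := fun x =>
      le_antisymm (hb ▸ (hab x).2) (ha ▸ (hab x).1)
    have h1 : ∫ x, Real.exp (s * X x) ∂ν = 1 := by simp [hXz]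
    rw [h1, ha, hb]
    simp
  · set p : ℝ := -a/(b-a) with hp
    have hba : (0:ℝ) < b - a := by linarith
    have hp0 : 0 ≤ p := div_nonneg (by linarith) hba.le
    have hp1 : p ≤ 1 := by
      rw [hp, div_le_one hba]; linarith
    set u : ℝ := s * (b-a) with hu
    have hpt : ∀ x, Real.exp (s * X x)
        ≤ ((b - X x) * Real.exp (s*a) + (X x - a) * Real.exp (s*b)) / (b-a) := by
      intro x
      have h1 := (hab x).1; have h2 := (hab x).2
      set lam : ℝ := (b - X x)/(b-a) with hlam
      have hl0 : 0 ≤ lam := div_nonneg (by linarith) hba.le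
      have hl1 : lam ≤ 1 := by rw [hlam, div_le_one hba]; linarith
      have hconv := convexOn_exp.2 (Set.mem_univ (s*a)) (Set.mem_univ (s*b))
        hl0 (by linarith : (0:ℝ) ≤ 1 - lam) (by ring)
      have harg : lam • (s*a) + (1-lam) • (s*b) = s * X x := by
        simp only [smul_eq_mul, hlam]
        field_simp
        ring
      rw [harg] at hconv
      calc Real.exp (s * X x) ≤ lam * Real.exp (s*a) + (1-lam) * Real.exp (s*b) := by
            simpa using hconv
        _ = ((b - X x) * Real.exp (s*a) + (X x - a) * Real.exp (s*b)) / (b-a) := by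
            rw [hlam]; field_simp; try ring
    have hI1 : Integrable (fun x => (b - X x) * Real.exp (s*a)) ν := by
      exact ((integrable_const b).sub hint).mul_const _
    have hI2 : Integrable (fun x => (X x - a) * Real.exp (s*b)) ν := by
      exact (hint.sub (integrable_const a)).mul_const _
    have hintR : Integrable
        (fun x => ((b - X x) * Real.exp (s*a) + (X x - a) * Real.exp (s*b)) / (b-a)) ν := by
      exact (hI1.add hI2).div_const _
    calc ∫ x, Real.exp (s * X x) ∂ν
        ≤ ∫ x, ((b - X x) * Real.exp (s*a) + (X x - a) * Real.exp (s*b)) / (b-a) ∂ν :=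
          integral_mono hexpint hintR hpt
      _ = (b * Real.exp (s*a) + (-a) * Real.exp (s*b)) / (b-a) := by
          rw [integral_div, integral_add hI1 hI2, integral_mul_const,
            integral_mul_const, integral_sub (integrable_const b) hint,
            integral_sub hint (integrable_const a), h0, integral_const, integral_const]
          simp
      _ = (1-p) * Real.exp (-p*u) + p * Real.exp ((1-p)*u) := by
          have h1 : -p*u = s*a := by rw [hp, hu]; field_simp; try ring
          have h2 : (1-p)*u = s*b := by rw [hp, hu]; field_simp; try ring
          rw [h1, h2, hp]
          field_simp
          try ring
      _ ≤ Real.exp (u^2/8) := key_ineq hp0 hp1 u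
      _ = Real.exp (s^2*(b-a)^2/8) := by rw [hu]; ring_nf


lemma integrable_of_abs_le {α : Type*} [MeasurableSpace α] {μ : Measure α}
    [IsFiniteMeasure μ] {h : α → ℝ} (hm : AEStronglyMeasurable h μ) {K : ℝ}
    (hb : ∀ x, |h x| ≤ K) : Integrable h μ :=
  (integrable_const K).mono' hm (ae_of_all _ (by simpa [Real.norm_eq_abs] using hb))

lemma mcdiarmid_mgf {Z : Type*} [MeasurableSpace Z] [Nonempty Z] (ν : Measure Z)
    [IsProbabilityMeasure ν] (m : ℕ) (f : (Fin m → Z) → ℝ) (hf : Measurable f)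
    {C : ℝ} (hC : ∀ z, |f z| ≤ C)
    {d : ℝ} (hd : ∀ (i : Fin m) (z z' : Fin m → Z), (∀ j, j ≠ i → z j = z' j) →
      |f z - f z'| ≤ d) (s : ℝ) :
    ∫ z, Real.exp (s * (f z - ∫ w, f w ∂(Measure.pi fun _ => ν)))
        ∂(Measure.pi fun _ : Fin m => ν)
      ≤ Real.exp (s^2 * m * d^2/8) := by
  induction m with
  | zero =>
      have hconst : ∀ z : Fin 0 → Z, f z = f default := fun z => by
        congr 1; exact Subsingleton.elim _ _
      have h1 : ∫ w, f w ∂(Measure.pi fun _ : Fin 0 => ν) = f default := by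
        rw [show f = fun _ => f default from funext hconst]
        simp
      simp only [h1]
      have : ∀ z : Fin 0 → Z, Real.exp (s * (f z - f default)) = 1 := by
        intro z; rw [hconst z]; simp
      simp only [this]
      simp
  | succ n ih =>
      set Pn := Measure.pi (fun _ : Fin n => ν) with hPn
      set Pm := Measure.pi (fun _ : Fin (n+1) => ν) with hPm
      set e := MeasurableEquiv.piFinSuccAbove (fun _ : Fin (n+1) => Z) 0 with he
      have mp : MeasurePreserving e Pm (ν.prod Pn) :=
        measurePreserving_piFinSuccAbove (fun _ : Fin (n+1) => ν) 0
      set F : Z × (Fin n → Z) → ℝ := fun q => f (e.symm q) with hF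
      have hFmeas : Measurable F := hf.comp e.symm.measurable
      have hFC : ∀ q, |F q| ≤ C := fun q => hC _
      -- e.symm (x,y) = insertNth 0 x y
      have hsymm : ∀ (x : Z) (y : Fin n → Z), e.symm (x, y) = Fin.insertNth 0 x y := by
        intro x y; rfl
      -- difference in first coordinate
      have hd1 : ∀ (x x' : Z) (y : Fin n → Z), |F (x, y) - F (x', y)| ≤ d := by
        intro x x' y
        rw [hF]
        simp only [hsymm]
        apply hd 0
        intro j hj
        obtain ⟨k, rfl⟩ := Fin.exists_succ_eq.2 hj
        rw [← Fin.succAbove_zero, Fin.insertNth_apply_succAbove,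
          Fin.insertNth_apply_succAbove]
      -- difference in a later coordinate
      have hd2 : ∀ (x : Z) (y y' : Fin n → Z) (k : Fin n), (∀ j, j ≠ k → y j = y' j) →
          |F (x, y) - F (x, y')| ≤ d := by
        intro x y y' k hk
        rw [hF]
        simp only [hsymm]
        apply hd (Fin.succ k)
        intro j hj
        rcases Fin.eq_zero_or_eq_succ j with rfl | ⟨l, rfl⟩
        · rw [Fin.insertNth_apply_same, Fin.insertNth_apply_same]
        · rw [← Fin.succAbove_zero, Fin.insertNth_apply_succAbove,
            Fin.insertNth_apply_succAbove]
          exact hk l (fun h => hj (by rw [h]))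
      set g : (Fin n → Z) → ℝ := fun y => ∫ x, F (x, y) ∂ν with hg
      have hgsm : StronglyMeasurable g :=
        hFmeas.stronglyMeasurable.integral_prod_left'
      have hgmeas : Measurable g := hgsm.measurable
      have hgC : ∀ y, |g y| ≤ C := by
        intro y
        rw [hg]
        have := norm_integral_le_of_norm_le_const (μ := ν) (f := fun x => F (x, y))
          (C := C) (ae_of_all _ (fun x => by simpa [Real.norm_eq_abs] using hFC (x, y)))
        simpa [Real.norm_eq_abs, measure_univ] using this
      have hFint : ∀ y, Integrable (fun x => F (x, y)) ν := fun y =>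
        integrable_of_abs_le ((hFmeas.comp (measurable_prodMk_right)).aestronglyMeasurable)
          (fun x => hFC (x, y))
      have hgd : ∀ (k : Fin n) (y y' : Fin n → Z), (∀ j, j ≠ k → y j = y' j) →
          |g y - g y'| ≤ d := by
        intro k y y' hyy
        rw [hg]
        rw [← integral_sub (hFint y) (hFint y')]
        have := norm_integral_le_of_norm_le_const (μ := ν)
          (f := fun x => F (x, y) - F (x, y')) (C := d)
          (ae_of_all _ (fun x => by
            simpa [Real.norm_eq_abs] using hd2 x y y' k hyy))
        simpa [Real.norm_eq_abs, measure_univ] using this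
      -- mean of f
      set M : ℝ := ∫ w, f w ∂Pm with hM
      have hMF : M = ∫ q, F q ∂(ν.prod Pn) := by
        rw [hM, ← mp.integral_comp e.measurableEmbedding]
        simp [hF]
      have hgmean : ∫ y, g y ∂Pn = M := by
        rw [hMF, integral_prod_symm _ (integrable_of_abs_le hFmeas.aestronglyMeasurable hFC)]
      -- the main computation
      have hexpC : ∀ (h : ℝ), |h| ≤ C → Real.exp (s * (h - M)) ≤ Real.exp (|s| * (2*C)) := by
        intro h hh
        rw [Real.exp_le_exp]
        have hMC : |M| ≤ C := by
          rw [hM]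
          have := norm_integral_le_of_norm_le_const (μ := Pm) (f := f)
            (C := C) (ae_of_all _ (fun z => by simpa [Real.norm_eq_abs] using hC z))
          simpa [Real.norm_eq_abs, measure_univ] using this
        calc s * (h - M) ≤ |s * (h - M)| := le_abs_self _
          _ = |s| * |h - M| := abs_mul _ _
          _ ≤ |s| * (2*C) := by
              apply mul_le_mul_of_nonneg_left _ (abs_nonneg s)
              calc |h - M| ≤ |h| + |M| := abs_sub _ _
                _ ≤ 2*C := by linarith
      have hintexp : Integrable (fun q => Real.exp (s * (F q - M))) (ν.prod Pn) :=
        integrable_of_abs_le (((hFmeas.sub measurable_const).const_mul s).exp.aestronglyMeasurable)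
          (fun q => by
            rw [abs_of_pos (Real.exp_pos _)]
            exact hexpC (F q) (hFC q))
      have step1 : ∫ z, Real.exp (s * (f z - M)) ∂Pm
          = ∫ q, Real.exp (s * (F q - M)) ∂(ν.prod Pn) := by
        rw [← mp.integral_comp e.measurableEmbedding]
        simp [hF]
      have step2 : ∫ q, Real.exp (s * (F q - M)) ∂(ν.prod Pn)
          = ∫ y, ∫ x, Real.exp (s * (F (x, y) - M)) ∂ν ∂Pn :=
        integral_prod_symm _ hintexp
      -- inner bound
      have inner_bound : ∀ y, ∫ x, Real.exp (s * (F (x, y) - M)) ∂ν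
          ≤ Real.exp (s * (g y - M)) * Real.exp (s^2*d^2/8) := by
        intro y
        have hsplit : ∀ x, Real.exp (s * (F (x, y) - M))
            = Real.exp (s * (g y - M)) * Real.exp (s * (F (x, y) - g y)) := by
          intro x
          rw [← Real.exp_add]
          congr 1
          ring
        simp only [hsplit]
        rw [integral_const_mul]
        apply mul_le_mul_of_nonneg_left _ (Real.exp_pos _).le
        -- Hoeffding for X := F (·, y) - g y
        set A : ℝ := ⨅ x, F (x, y) with hA
        have hbdd : BddBelow (Set.range (fun x => F (x, y))) :=
          ⟨-C, fun v ⟨x, hx⟩ => hx ▸ (abs_le.1 (hFC (x, y))).1⟩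
        have hXmem : ∀ x, F (x, y) - g y ∈ Set.Icc (A - g y) (A + d - g y) := by
          intro x
          constructor
          · have : A ≤ F (x, y) := ciInf_le hbdd x
            linarith
          · have : F (x, y) ≤ A + d := by
              have h1 : F (x, y) - d ≤ A := by
                apply le_ciInf
                intro x'
                have := hd1 x x' y
                have := abs_le.1 (hd1 x x' y)
                linarith [this.1, this.2]
              linarith
            linarith
        have hXmean : ∫ x, (F (x, y) - g y) ∂ν = 0 := by
          rw [integral_sub (hFint y) (integrable_const _)]
          simp [hg]
        have := hoeffding_lemma ν ((hFmeas.comp measurable_prodMk_right).sub measurable_const)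
          hXmem hXmean s
        calc ∫ x, Real.exp (s * (F (x, y) - g y)) ∂ν
            ≤ Real.exp (s^2*(A + d - g y - (A - g y))^2/8) := this
          _ = Real.exp (s^2*d^2/8) := by ring_nf
      -- outer bound via IH
      have houter : ∫ y, ∫ x, Real.exp (s * (F (x, y) - M)) ∂ν ∂Pn
          ≤ ∫ y, Real.exp (s * (g y - M)) * Real.exp (s^2*d^2/8) ∂Pn := by
        apply integral_mono _ _ inner_bound
        · refine integrable_of_abs_le
            ((((hFmeas.sub measurable_const).const_mul s).exp.stronglyMeasurable.integral_prod_left').aestronglyMeasurable) (K := Real.exp (|s| * (2*C))) ?_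
          intro y
          rw [abs_of_nonneg (integral_nonneg (fun x => (Real.exp_pos _).le))]
          have := norm_integral_le_of_norm_le_const (μ := ν)
            (f := fun x => Real.exp (s * (F (x, y) - M))) (C := Real.exp (|s| * (2*C)))
            (ae_of_all _ (fun x => by
              rw [Real.norm_eq_abs, abs_of_pos (Real.exp_pos _)]
              exact hexpC _ (hFC (x, y))))
          simpa [Real.norm_eq_abs, measure_univ,
            abs_of_nonneg (integral_nonneg (μ := ν) (f := fun x => Real.exp (s * (F (x, y) - M))) (fun x : Z => (Real.exp_pos _).le))] using this
        · apply Integrable.mul_const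
          refine integrable_of_abs_le (((hgmeas.sub measurable_const).const_mul s).exp.aestronglyMeasurable)
            (K := Real.exp (|s| * (2*C))) ?_
          intro y
          rw [abs_of_pos (Real.exp_pos _)]
          exact hexpC _ (hgC y)
      have hIH : ∫ y, Real.exp (s * (g y - M)) ∂Pn ≤ Real.exp (s^2 * n * d^2/8) := by
        have := ih g hgmeas hgC hgd
        rwa [hgmean] at this
      calc ∫ z, Real.exp (s * (f z - M)) ∂Pm
          = ∫ y, ∫ x, Real.exp (s * (F (x, y) - M)) ∂ν ∂Pn := by rw [step1, step2]
        _ ≤ ∫ y, Real.exp (s * (g y - M)) * Real.exp (s^2*d^2/8) ∂Pn := houter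
        _ = (∫ y, Real.exp (s * (g y - M)) ∂Pn) * Real.exp (s^2*d^2/8) := by
            rw [integral_mul_const]
        _ ≤ Real.exp (s^2 * n * d^2/8) * Real.exp (s^2*d^2/8) := by
            apply mul_le_mul_of_nonneg_right hIH (Real.exp_pos _).le
        _ = Real.exp (s^2 * ((n+1 : ℕ) : ℝ) * d^2/8) := by
            rw [← Real.exp_add]; congr 1; push_cast; ring


lemma mcdiarmid_onesided {Z : Type*} [MeasurableSpace Z] [Nonempty Z] (ν : Measure Z)
    [IsProbabilityMeasure ν] (m : ℕ) (hm : 0 < m) (f : (Fin m → Z) → ℝ)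
    (hf : Measurable f) {C : ℝ} (hC : ∀ z, |f z| ≤ C)
    {d : ℝ} (hdpos : 0 < d)
    (hd : ∀ (i : Fin m) (z z' : Fin m → Z), (∀ j, j ≠ i → z j = z' j) →
      |f z - f z'| ≤ d) (t : ℝ) (ht : 0 < t) :
    ((Measure.pi fun _ : Fin m => ν)
        {z | t ≤ f z - ∫ w, f w ∂(Measure.pi fun _ => ν)}).toReal
      ≤ Real.exp (-2*t^2/(m*d^2)) := by
  set P := Measure.pi fun _ : Fin m => ν with hP
  set M : ℝ := ∫ w, f w ∂P with hM
  set s₀ : ℝ := 4*t/(m*d^2) with hs₀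
  have hmpos : (0:ℝ) < m := by exact_mod_cast hm
  have hs₀pos : 0 < s₀ := by positivity
  have hMC : |M| ≤ C := by
    have := norm_integral_le_of_norm_le_const (μ := P) (f := f)
      (C := C) (ae_of_all _ (fun z => by simpa [Real.norm_eq_abs] using hC z))
    simpa [Real.norm_eq_abs, measure_univ] using this
  have hint : Integrable (fun z => Real.exp (s₀ * (f z - M))) P := by
    refine integrable_of_abs_le (((hf.sub measurable_const).const_mul s₀).exp.aestronglyMeasurable)
      (K := Real.exp (|s₀| * (2*C))) ?_
    intro z
    rw [abs_of_pos (Real.exp_pos _), Real.exp_le_exp]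
    calc s₀ * (f z - M) ≤ |s₀ * (f z - M)| := le_abs_self _
      _ = |s₀| * |f z - M| := abs_mul _ _
      _ ≤ |s₀| * (2*C) := by
          apply mul_le_mul_of_nonneg_left _ (abs_nonneg s₀)
          calc |f z - M| ≤ |f z| + |M| := abs_sub _ _
            _ ≤ 2*C := by have := hC z; linarith
  have hchernoff := measure_ge_le_exp_mul_mgf (μ := P) (X := fun z => f z - M)
    (t := s₀) t hs₀pos.le hint
  have hmgf : mgf (fun z => f z - M) P s₀ ≤ Real.exp (s₀^2 * m * d^2/8) := by
    rw [mgf]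
    exact mcdiarmid_mgf ν m f hf hC hd s₀
  calc (P {z | t ≤ f z - M}).toReal
      ≤ Real.exp (-s₀ * t) * mgf (fun z => f z - M) P s₀ := hchernoff
    _ ≤ Real.exp (-s₀ * t) * Real.exp (s₀^2 * m * d^2/8) :=
        mul_le_mul_of_nonneg_left hmgf (Real.exp_pos _).le
    _ = Real.exp (-s₀ * t + s₀^2 * m * d^2/8) := (Real.exp_add _ _).symm
    _ = Real.exp (-2*t^2/(m*d^2)) := by
        congr 1
        rw [hs₀]
        field_simp
        ring

lemma mcdiarmid_tail {Z : Type*} [MeasurableSpace Z] [Nonempty Z] (ν : Measure Z)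
    [IsProbabilityMeasure ν] (m : ℕ) (hm : 0 < m) (f : (Fin m → Z) → ℝ)
    (hf : Measurable f) {C : ℝ} (hC : ∀ z, |f z| ≤ C)
    {d : ℝ} (hdpos : 0 < d)
    (hd : ∀ (i : Fin m) (z z' : Fin m → Z), (∀ j, j ≠ i → z j = z' j) →
      |f z - f z'| ≤ d) (t : ℝ) (ht : 0 < t) :
    ((Measure.pi fun _ : Fin m => ν)
        {z | t ≤ |f z - ∫ w, f w ∂(Measure.pi fun _ => ν)|}).toReal
      ≤ 2 * Real.exp (-2*t^2/(m*d^2)) := by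
  set P := Measure.pi fun _ : Fin m => ν with hP
  set M : ℝ := ∫ w, f w ∂P with hM
  have hsub : {z | t ≤ |f z - M|} ⊆ {z | t ≤ f z - M} ∪ {z | t ≤ (fun w => -f w) z - (-M)} := by
    intro z hz
    simp only [Set.mem_setOf_eq] at hz
    rcases abs_cases (f z - M) with ⟨h1, _⟩ | ⟨h1, _⟩
    · left; simp only [Set.mem_setOf_eq]; linarith
    · right; simp only [Set.mem_setOf_eq]; linarith
  have hone := mcdiarmid_onesided ν m hm f hf hC hdpos hd t ht
  have hMneg : ∫ w, (fun w => -f w) w ∂P = -M := by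
    simp only [hM]
    rw [integral_neg]
  have hdneg : ∀ (i : Fin m) (z z' : Fin m → Z), (∀ j, j ≠ i → z j = z' j) →
      |(fun w => -f w) z - (fun w => -f w) z'| ≤ d := by
    intro i z z' h
    have h2 := hd i z z' h
    have h3 : (fun w => -f w) z - (fun w => -f w) z' = -(f z - f z') := by ring
    rw [h3, abs_neg]
    exact h2
  have htwo := mcdiarmid_onesided ν m hm (fun w => -f w) hf.neg
    (C := C) (fun z => by simpa using hC z) hdpos hdneg t ht
  rw [hMneg] at htwo
  have hfin1 : P {z | t ≤ f z - M} ≠ ⊤ := measure_ne_top _ _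
  have hfin2 : P {z | t ≤ (fun w => -f w) z - (-M)} ≠ ⊤ := measure_ne_top _ _
  calc (P {z | t ≤ |f z - M|}).toReal
      ≤ (P ({z | t ≤ f z - M} ∪ {z | t ≤ (fun w => -f w) z - (-M)})).toReal := by
        apply ENNReal.toReal_mono (measure_ne_top _ _) (measure_mono hsub)
    _ ≤ (P {z | t ≤ f z - M} + P {z | t ≤ (fun w => -f w) z - (-M)}).toReal := by
        apply ENNReal.toReal_mono (by simp [hfin1, hfin2, ENNReal.add_ne_top])
          (measure_union_le _ _)
    _ = (P {z | t ≤ f z - M}).toReal + (P {z | t ≤ (fun w => -f w) z - (-M)}).toReal :=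
        ENNReal.toReal_add hfin1 hfin2
    _ ≤ Real.exp (-2*t^2/(m*d^2)) + Real.exp (-2*t^2/(m*d^2)) := add_le_add hone htwo
    _ = 2 * Real.exp (-2*t^2/(m*d^2)) := by ring


-- bounded differences over a finset
lemma diff_le_card {ι Z : Type*} [Fintype ι] [DecidableEq ι]
    (f : (ι → Z) → ℝ) {d : ℝ}
    (hd : ∀ (i : ι) (z z' : ι → Z), (∀ j, j ≠ i → z j = z' j) → |f z - f z'| ≤ d)
    (z z' : ι → Z) : |f z - f z'| ≤ (Fintype.card ι) * d := by
  suffices h : ∀ (S : Finset ι) (z z' : ι → Z), (∀ j ∉ S, z j = z' j) →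
      |f z - f z'| ≤ S.card * d by
    simpa using h Finset.univ z z' (by simp)
  intro S
  induction S using Finset.induction with
  | empty =>
      intro z z' hzz
      have : z = z' := funext fun j => hzz j (by simp)
      simp [this]
  | @insert a S' ha ih =>
      intro z z' hzz
      set z'' := Function.update z a (z' a) with hz''
      have h1 : |f z - f z''| ≤ d := by
        apply hd a
        intro j hj
        rw [hz'', Function.update_of_ne hj]
      have h2 : ∀ j ∉ S', z'' j = z' j := by
        intro j hj
        rcases eq_or_ne j a with rfl | hja
        · rw [hz'', Function.update_self]
        · rw [hz'', Function.update_of_ne hja]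
          exact hzz j (by simp [hja, hj])
      have h3 := ih z'' z' h2
      calc |f z - f z'| ≤ |f z - f z''| + |f z'' - f z'| := abs_sub_le _ _ _
        _ ≤ d + S'.card * d := add_le_add h1 h3
        _ = (insert a S').card * d := by
            rw [Finset.card_insert_of_notMem ha]; push_cast; ring

-- the joint law of independent variables indexed by an injection is the product measure
lemma law_eq_pi {Ω : Type*} [MeasureSpace Ω] [IsProbabilityMeasure (ℙ : Measure Ω)]
    {Z : Type*} [MeasurableSpace Z] {m : ℕ}
    (Zs : Fin (m + 1) → Ω → Z) (hmeas : ∀ i, Measurable (Zs i))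
    (hindep : iIndepFun Zs ℙ)
    (hident : ∀ i, Measure.map (Zs i) ℙ = Measure.map (Zs 0) ℙ) :
    Measure.map (fun ω (k : Fin m) => Zs ((0 : Fin (m+1)).succAbove k) ω) ℙ
      = Measure.pi (fun _ : Fin m => Measure.map (Zs 0) ℙ) := by
  set ν := Measure.map (Zs 0) ℙ with hν
  haveI : IsProbabilityMeasure ν := Measure.isProbabilityMeasure_map (hmeas 0).aemeasurable
  set W : Ω → (Fin m → Z) := fun ω k => Zs ((0 : Fin (m+1)).succAbove k) ω with hW
  have hWmeas : Measurable W := measurable_pi_lambda _ (fun k => hmeas _)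
  refine (Measure.pi_eq ?_).symm
  intro s hs
  rw [Measure.map_apply hWmeas (MeasurableSet.univ_pi hs)]
  have hginj : Function.Injective ((0 : Fin (m+1)).succAbove) :=
    Fin.succAbove_right_injective
  set g : Fin m ↪ Fin (m+1) := ⟨(0 : Fin (m+1)).succAbove, hginj⟩ with hg
  set sets' : Fin (m+1) → Set Z := fun i => Fin.cases Set.univ s i with hsets'
  have hsets'g : ∀ k : Fin m, sets' ((0 : Fin (m+1)).succAbove k) = s k := by
    intro k
    rw [hsets']
    simp [Fin.succAbove_zero]
  have hpre : W ⁻¹' (Set.univ.pi s) = ⋂ i ∈ Finset.univ.map g, Zs i ⁻¹' sets' i := by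
    ext ω
    simp only [Set.mem_preimage, Set.mem_univ_pi, Set.mem_iInter, Finset.mem_map,
      Finset.mem_univ, true_and, hg, Function.Embedding.coeFn_mk]
    constructor
    · rintro h i ⟨k, rfl⟩
      rw [hsets'g k]
      exact h k
    · intro h k
      rw [← hsets'g k]
      exact h _ ⟨k, rfl⟩
  rw [hpre]
  have := hindep.measure_inter_preimage_eq_mul (Finset.univ.map g) (sets := sets')
    (fun i _ => by
      rcases Fin.eq_zero_or_eq_succ i with rfl | ⟨l, rfl⟩
      · simpa [hsets'] using MeasurableSet.univ
      · have h2 : sets' l.succ = s l := by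
          have h3 : (0 : Fin (m+1)).succAbove l = l.succ := by
            rw [Fin.succAbove_zero]
          rw [← h3, hsets'g l]
        rw [h2]
        exact hs l)
  rw [this, Finset.prod_map]
  apply Finset.prod_congr rfl
  intro k _
  simp only [hg, Function.Embedding.coeFn_mk]
  rw [hsets'g k, ← Measure.map_apply (hmeas _) (hs k), hident]



-- comparison of two leave-one-out datasets via a permutation
lemma loo_compare {Z : Type*} {m : ℕ} (i : Fin (m+1)) (hi : i ≠ 0)
    (z : Fin (m+1) → Z) :
    ∃ (σ : Equiv.Perm (Fin m)) (l : Fin m),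
      (∀ k, k ≠ l → ((fun k => z (i.succAbove k)) ∘ σ) k = z ((0 : Fin (m+1)).succAbove k)) := by
  set τ := Equiv.swap (0 : Fin (m+1)) i with hτ
  have hτ0 : τ 0 = i := Equiv.swap_apply_left _ _
  set e0 : Fin m ≃ {x : Fin (m+1) // x ≠ 0} := finSuccAboveEquiv 0 with he0
  set ei : Fin m ≃ {x : Fin (m+1) // x ≠ i} := finSuccAboveEquiv i with hei
  have hiff : ∀ x : Fin (m+1), x ≠ 0 ↔ τ x ≠ i := by
    intro x
    rw [← hτ0]
    exact (Equiv.injective τ).ne_iff.symm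
  set mid : {x : Fin (m+1) // x ≠ 0} ≃ {x : Fin (m+1) // x ≠ i} :=
    τ.subtypeEquiv hiff with hmid
  set σ : Equiv.Perm (Fin m) := e0.trans (mid.trans ei.symm) with hσ
  have hprop : ∀ k, i.succAbove (σ k) = τ ((0 : Fin (m+1)).succAbove k) := by
    intro k
    have h1 : (ei (σ k) : Fin (m+1)) = i.succAbove (σ k) := rfl
    have h2 : ei (σ k) = mid (e0 k) := by
      rw [hσ]
      simp
    rw [← h1, h2]
    rfl
  obtain ⟨l, hl⟩ : ∃ l : Fin m, l.succ = i := ⟨i.pred hi, Fin.succ_pred i hi⟩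
  refine ⟨σ, l, ?_⟩
  intro k hk
  simp only [Function.comp_apply]
  rw [hprop k]
  congr 1
  have hsa : (0 : Fin (m+1)).succAbove k = k.succ := by rw [Fin.succAbove_zero]
  rw [hsa]
  apply Equiv.swap_apply_of_ne_of_ne
  · exact Fin.succ_ne_zero k
  · rw [← hl]
    exact fun h => hk (Fin.succ_injective _ h)




/-- Lemma 2 (concentration of the leave-one-out predictors): under uniform
stability and a bi-Lipschitz parametrization, for i.i.d. data
`P(max_i ‖μ_{β̂₋ᵢ} − μ_{β̄₋₁}‖_∞ ≥ ε) ≤ 2p exp(−(2κ₁²/n)(ε/(κ₂ c_{n−1}) − 1/κ₁)²)`.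
The dataset has `m + 1` points (so `n = m + 1`) and `T` trains on `m` points,
with `c` playing the role of `c_{n−1}`. -/
theorem stmt2 {Ω : Type*} [MeasureSpace Ω] [IsProbabilityMeasure (ℙ : Measure Ω)]
    {Z : Type*} [MeasurableSpace Z] {X : Type*} [TopologicalSpace X]
    (m p : ℕ) (hp : 0 < p)
    (c κ₁ κ₂ : ℝ) (hc : 0 < c) (hκ₁ : 0 < κ₁) (hκ₂ : 0 < κ₂)
    (μ : (Fin p → ℝ) → (X →ᵇ ℝ))
    (T : (Fin m → Z) → (Fin p → ℝ)) (hT : Measurable T)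
    (hsym : ∀ (σ : Equiv.Perm (Fin m)) (z : Fin m → Z), T (z ∘ σ) = T z)
    (hstab : ∀ (i : Fin m) (z z' : Fin m → Z), (∀ j, j ≠ i → z j = z' j) →
      ‖μ (T z) - μ (T z')‖ ≤ c)
    (hbilip : ∀ β β' : Fin p → ℝ,
      κ₁ * ‖β - β'‖ ≤ ‖μ β - μ β'‖ ∧ ‖μ β - μ β'‖ ≤ κ₂ * ‖β - β'‖)
    (Zs : Fin (m + 1) → Ω → Z) (hmeas : ∀ i, Measurable (Zs i))
    (hindep : iIndepFun Zs ℙ)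
    (hident : ∀ i, Measure.map (Zs i) ℙ = Measure.map (Zs 0) ℙ)
    (ε : ℝ) (hε : 0 < ε) (hεbig : 1 / κ₁ ≤ ε / (κ₂ * c)) :
    (ℙ {ω | ε ≤ ⨆ i : Fin (m + 1),
        ‖μ (T (fun k => Zs (i.succAbove k) ω)) -
          μ (fun j => ∫ ω', T (fun k => Zs ((0 : Fin (m + 1)).succAbove k) ω') j ∂ℙ)‖}).toReal
      ≤ 2 * p * Real.exp (-(2 * κ₁ ^ 2 / (m + 1)) * (ε / (κ₂ * c) - 1 / κ₁) ^ 2) := by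
  classical
  have hΩne : Nonempty Ω := by
    by_contra h
    rw [not_nonempty_iff] at h
    have h1 : (ℙ : Measure Ω) Set.univ = 1 := measure_univ
    rw [Set.eq_empty_of_isEmpty Set.univ, measure_empty] at h1
    exact zero_ne_one h1
  obtain ⟨ω₀⟩ := hΩne
  haveI hZne : Nonempty Z := ⟨Zs 0 ω₀⟩
  haveI hpne : Nonempty (Fin p) := ⟨⟨0, hp⟩⟩
  have hp1 : (1:ℝ) ≤ p := by exact_mod_cast hp
  have hκ12 : κ₁ ≤ κ₂ := by
    obtain ⟨h1, h2⟩ := hbilip 0 (fun _ => 1)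
    have hnorm : ‖(0 : Fin p → ℝ) - (fun _ => 1)‖ = 1 := by
      have he : (0 : Fin p → ℝ) - (fun _ => 1) = fun _ => (-1 : ℝ) := by
        funext j; simp
      rw [he, pi_norm_const]
      simp
    rw [hnorm, mul_one] at h1 h2
    linarith
  set b : Fin p → ℝ :=
    fun j => ∫ ω', T (fun k => Zs ((0 : Fin (m + 1)).succAbove k) ω') j ∂ℙ with hbdef
  set s := ε / (κ₂ * c) - 1 / κ₁ with hs
  have hs0 : 0 ≤ s := by rw [hs]; linarith
  -- m = 0 case : the event is empty
  rcases Nat.eq_zero_or_pos m with rfl | hm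
  · have hempty : {ω | ε ≤ ⨆ i : Fin (0 + 1),
        ‖μ (T (fun k => Zs (i.succAbove k) ω)) - μ b‖} = ∅ := by
      ext ω
      simp only [Set.mem_setOf_eq, Set.mem_empty_iff_false, iff_false, not_le]
      have hbT : b = T (fun k : Fin 0 => Zs ((0 : Fin 1).succAbove k) ω) := by
        funext j
        rw [hbdef]
        have hconst : ∀ ω' : Ω, T (fun k : Fin 0 => Zs ((0 : Fin 1).succAbove k) ω') j
            = T (fun k : Fin 0 => Zs ((0 : Fin 1).succAbove k) ω) j := by
          intro ω'; congr 1; exact Subsingleton.elim _ _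
        simp only [hconst]
        simp
      have hz : ∀ i : Fin 1, (fun k : Fin 0 => Zs (i.succAbove k) ω)
          = (fun k : Fin 0 => Zs ((0 : Fin 1).succAbove k) ω) :=
        fun i => Subsingleton.elim _ _
      have : ∀ i : Fin 1, ‖μ (T (fun k => Zs (i.succAbove k) ω)) - μ b‖ = 0 := by
        intro i
        rw [hz i, hbT]
        simp
      simp only [this]
      rw [ciSup_const]
      exact hε
    rw [hempty]
    simp
    positivity
  -- s = 0 case
  rcases eq_or_lt_of_le hs0 with hseq | hspos
  · have hRHS : 2 * (p:ℝ) * Real.exp (-(2 * κ₁ ^ 2 / (m + 1)) * s ^ 2) = 2 * p := by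
      rw [← hseq]
      simp
    rw [hRHS]
    have hle1 : (ℙ {ω | ε ≤ ⨆ i : Fin (m + 1),
        ‖μ (T (fun k => Zs (i.succAbove k) ω)) - μ b‖}).toReal ≤ 1 := by
      have h1 : (ℙ : Measure Ω) {ω | ε ≤ ⨆ i : Fin (m + 1),
          ‖μ (T (fun k => Zs (i.succAbove k) ω)) - μ b‖} ≤ 1 := prob_le_one
      have := ENNReal.toReal_mono ENNReal.one_ne_top h1
      simpa using this
    linarith
  -- main case
  set ν := Measure.map (Zs 0) ℙ with hν
  haveI : IsProbabilityMeasure ν := Measure.isProbabilityMeasure_map (hmeas 0).aemeasurable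
  set P := Measure.pi (fun _ : Fin m => ν) with hP
  set W : Ω → (Fin m → Z) := fun ω k => Zs ((0 : Fin (m+1)).succAbove k) ω with hWdef
  have hWmeas : Measurable W := measurable_pi_lambda _ (fun k => hmeas _)
  have hlaw : Measure.map W ℙ = P := law_eq_pi Zs hmeas hindep hident
  set t := c * s with htdef
  set d := c / κ₁ with hddef
  have hdpos : 0 < d := by rw [hddef]; positivity
  have htpos : 0 < t := by rw [htdef]; positivity
  have hTd : ∀ (i : Fin m) (z z' : Fin m → Z), (∀ j, j ≠ i → z j = z' j) →
      ‖T z - T z'‖ ≤ d := by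
    intro i z z' h
    have h1 := (hbilip (T z) (T z')).1
    have h2 := hstab i z z' h
    rw [hddef, le_div_iff₀ hκ₁, mul_comm]
    linarith
  have hTjd : ∀ (j : Fin p) (i : Fin m) (z z' : Fin m → Z), (∀ l, l ≠ i → z l = z' l) →
      |T z j - T z' j| ≤ d := by
    intro j i z z' h
    have h1 := norm_le_pi_norm (T z - T z') j
    have h2 := hTd i z z' h
    rw [Pi.sub_apply, Real.norm_eq_abs] at h1
    linarith
  set z₀ : Fin m → Z := fun _ => Zs 0 ω₀ with hz₀
  have hTjC : ∀ (j : Fin p) (z : Fin m → Z), |T z j| ≤ |T z₀ j| + m * d := by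
    intro j z
    have := diff_le_card (fun z => T z j) (hTjd j) z z₀
    rw [Fintype.card_fin] at this
    have habs := abs_sub_abs_le_abs_sub (T z j) (T z₀ j)
    linarith
  have hTjmeas : ∀ j : Fin p, Measurable (fun z => T z j) :=
    fun j => (measurable_pi_apply j).comp hT
  have hbj : ∀ j, b j = ∫ z, T z j ∂P := by
    intro j
    rw [hbdef, ← hlaw,
      integral_map hWmeas.aemeasurable (hTjmeas j).aestronglyMeasurable]
  -- event inclusion
  have hsub : {ω | ε ≤ ⨆ i : Fin (m + 1),
      ‖μ (T (fun k => Zs (i.succAbove k) ω)) - μ b‖}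
      ⊆ ⋃ j : Fin p, {ω | t ≤ |T (W ω) j - b j|} := by
    intro ω hω
    simp only [Set.mem_setOf_eq] at hω
    obtain ⟨i₀, hi₀⟩ := Finite.exists_max
      (fun i : Fin (m+1) => ‖μ (T (fun k => Zs (i.succAbove k) ω)) - μ b‖)
    have hε' : ε ≤ ‖μ (T (fun k => Zs (i₀.succAbove k) ω)) - μ b‖ :=
      le_trans hω (ciSup_le hi₀)
    have hstep1 : ‖μ (T (fun k => Zs (i₀.succAbove k) ω)) - μ (T (W ω))‖ ≤ c := by
      rcases eq_or_ne i₀ 0 with rfl | hne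
      · have : (fun k => Zs ((0:Fin (m+1)).succAbove k) ω) = W ω := rfl
        rw [this]
        simp
        exact hc.le
      · obtain ⟨σ, l, hσ⟩ := loo_compare i₀ hne (fun idx => Zs idx ω)
        have hTeq : T ((fun k => Zs (i₀.succAbove k) ω) ∘ σ)
            = T (fun k => Zs (i₀.succAbove k) ω) := hsym σ _
        have := hstab l ((fun k => Zs (i₀.succAbove k) ω) ∘ σ) (W ω)
          (fun j hj => hσ j hj)
        rwa [hTeq] at this
    have hstep2 : ‖μ (T (W ω)) - μ b‖ ≤ κ₂ * ‖T (W ω) - b‖ := (hbilip _ _).2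
    have hnorm_ge : t ≤ ‖T (W ω) - b‖ := by
      have h3 : ε ≤ c + κ₂ * ‖T (W ω) - b‖ := by
        calc ε ≤ ‖μ (T (fun k => Zs (i₀.succAbove k) ω)) - μ b‖ := hε'
          _ ≤ ‖μ (T (fun k => Zs (i₀.succAbove k) ω)) - μ (T (W ω))‖
              + ‖μ (T (W ω)) - μ b‖ := by
                have := norm_sub_le_norm_sub_add_norm_sub
                  (μ (T (fun k => Zs (i₀.succAbove k) ω))) (μ (T (W ω))) (μ b)
                linarith
          _ ≤ c + κ₂ * ‖T (W ω) - b‖ := add_le_add hstep1 hstep2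
      have hts : κ₂ * t ≤ ε - c := by
        rw [htdef, hs]
        have hne : κ₂ * c ≠ 0 := by positivity
        have hexp : κ₂ * (c * (ε / (κ₂ * c) - 1 / κ₁)) = ε - κ₂ * c / κ₁ := by
          field_simp
        rw [hexp]
        have : c ≤ κ₂ * c / κ₁ := by
          rw [le_div_iff₀ hκ₁]
          nlinarith
        linarith
      nlinarith
    by_contra hnot
    simp only [Set.mem_iUnion, Set.mem_setOf_eq, not_exists, not_le] at hnot
    have : ‖T (W ω) - b‖ < t := by
      rw [pi_norm_lt_iff htpos]
      intro j
      rw [Pi.sub_apply, Real.norm_eq_abs]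
      exact hnot j
    linarith
  -- tail bound
  have htail : ∀ j : Fin p, (ℙ {ω | t ≤ |T (W ω) j - b j|}).toReal
      ≤ 2 * Real.exp (-2*t^2/(m*d^2)) := by
    intro j
    have hSmeas : MeasurableSet {z : Fin m → Z | t ≤ |T z j - b j|} :=
      measurableSet_le measurable_const ((hTjmeas j).sub measurable_const).abs
    have hEj : {ω | t ≤ |T (W ω) j - b j|} = W ⁻¹' {z | t ≤ |T z j - b j|} := rfl
    rw [hEj, ← Measure.map_apply hWmeas hSmeas, hlaw]
    have := mcdiarmid_tail ν m hm (fun z => T z j) (hTjmeas j)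
      (C := |T z₀ j| + m * d) (hTjC j) hdpos (hTjd j) t htpos
    rwa [← hP, ← hbj j] at this
  -- put it together
  have hunion : ℙ {ω | ε ≤ ⨆ i : Fin (m + 1),
      ‖μ (T (fun k => Zs (i.succAbove k) ω)) - μ b‖}
      ≤ ∑ j : Fin p, ℙ {ω | t ≤ |T (W ω) j - b j|} :=
    (measure_mono hsub).trans (measure_iUnion_fintype_le _ _)
  have hfin : ∀ j : Fin p, ℙ {ω | t ≤ |T (W ω) j - b j|} ≠ ⊤ :=
    fun j => measure_ne_top _ _
  calc (ℙ {ω | ε ≤ ⨆ i : Fin (m + 1),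
      ‖μ (T (fun k => Zs (i.succAbove k) ω)) - μ b‖}).toReal
      ≤ (∑ j : Fin p, ℙ {ω | t ≤ |T (W ω) j - b j|}).toReal := by
        apply ENNReal.toReal_mono _ hunion
        exact (ENNReal.sum_lt_top.2 (fun j _ => (hfin j).lt_top)).ne
      _ = ∑ j : Fin p, (ℙ {ω | t ≤ |T (W ω) j - b j|}).toReal :=
        ENNReal.toReal_sum (fun j _ => hfin j)
      _ ≤ ∑ _j : Fin p, 2 * Real.exp (-2*t^2/(m*d^2)) :=
        Finset.sum_le_sum (fun j _ => htail j)
      _ = p * (2 * Real.exp (-2*t^2/(m*d^2))) := by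
        rw [Finset.sum_const]
        simp [mul_comm]
      _ ≤ 2 * p * Real.exp (-(2 * κ₁ ^ 2 / (m + 1)) * s ^ 2) := by
        have hexp_le : -2*t^2/(m*d^2) ≤ -(2 * κ₁ ^ 2 / (m + 1)) * s ^ 2 := by
          rw [htdef, hddef]
          have hm1 : (0:ℝ) < m := by exact_mod_cast hm
          have heq : -2*(c*s)^2/(m*(c/κ₁)^2) = -(2 * κ₁^2 / m) * s^2 := by
            field_simp
          rw [heq]
          have : 2 * κ₁ ^ 2 / (m + 1) * s ^ 2 ≤ 2 * κ₁ ^ 2 / m * s ^ 2 := by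
            apply mul_le_mul_of_nonneg_right _ (sq_nonneg s)
            apply div_le_div_of_nonneg_left (by positivity) hm1 (by linarith)
          linarith
        calc (p:ℝ) * (2 * Real.exp (-2*t^2/(m*d^2)))
            ≤ p * (2 * Real.exp (-(2 * κ₁ ^ 2 / (m + 1)) * s ^ 2)) := by
              apply mul_le_mul_of_nonneg_left _ (by positivity)
              exact mul_le_mul_of_nonneg_left (Real.exp_le_exp.2 hexp_le) (by norm_num)
          _ = 2 * p * Real.exp (-(2 * κ₁ ^ 2 / (m + 1)) * s ^ 2) := by ring
end

section
/- For the full-conformal region with a uniformly stable algorithm: if ‖μ_{β̂_{x,y}} − μ_{β̂ₙ}‖_∞ ≤ c_{n+1}/2 for all (x,y) (one-point-addition stability), then Ĉ_α(x) ⊇ {y ∈ ℝ : (1/n)·#{i : |Yᵢ − μ_{β̂ₙ}(Xᵢ)| ≥ |y − μ_{β̂ₙ}(x)| + c_{n+1}} > α}, where Ĉ_α(x) = {y : (1/n)·#{i : |Yᵢ − μ_{β̂_{x,y}}(Xᵢ)| ≥ |y − μ_{β̂_{x,y}}(x)|} > α}. -/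
open BoundedContinuousFunction

/-- Deterministic inclusion for the full-conformal region: if the retrained
predictor `μ_{β̂_{x,y}}` is uniformly within `c_{n+1}/2` (in sup-norm) of the
predictor `μ_{β̂ₙ}` trained on the `n` points alone, then the full-conformal
region contains every `y` for which strictly more than an `α`-fraction of
residuals (computed with `μ_{β̂ₙ}` and margin `c_{n+1}`) are large. -/
theorem stmt11 {X : Type*} [TopologicalSpace X] (n : ℕ) (hn : 0 < n)
    (α c : ℝ)
    (μfull : X → ℝ → (X →ᵇ ℝ))  -- (x, y) ↦ μ_{β̂_{x,y}}
    (μn : X →ᵇ ℝ)               -- μ_{β̂ₙ}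
    (hstab : ∀ (x : X) (y : ℝ), ‖μfull x y - μn‖ ≤ c / 2)
    (Xs : Fin n → X) (Ys : Fin n → ℝ) (x : X) :
    {y : ℝ | α < (↑(Finset.univ.filter (fun i : Fin n =>
        |y - μn x| + c ≤ |Ys i - μn (Xs i)|)).card : ℝ) / n} ⊆
      {y : ℝ | α < (↑(Finset.univ.filter (fun i : Fin n =>
        |y - μfull x y x| ≤ |Ys i - μfull x y (Xs i)|)).card : ℝ) / n} := by
  intro y hy
  simp only [Set.mem_setOf_eq] at hy ⊢
  refine lt_of_lt_of_le hy ?_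
  have hn' : (0:ℝ) < n := by exact_mod_cast hn
  apply div_le_div_of_nonneg_right ?_ hn'.le
  norm_cast
  apply Finset.card_le_card
  intro i hi
  simp only [Finset.mem_filter, Finset.mem_univ, true_and] at hi ⊢
  have hb : ∀ z : X, |μfull x y z - μn z| ≤ c / 2 := fun z => by
    have := (μfull x y - μn).norm_coe_le_norm z
    simpa [Real.norm_eq_abs] using this.trans (hstab x y)
  have h1 := hb x
  have h2 := hb (Xs i)
  have e1 : |y - μfull x y x| ≤ |y - μn x| + c/2 := by
    calc |y - μfull x y x| ≤ |y - μn x| + |μn x - μfull x y x| := by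
          simpa using abs_sub_le y (μn x) (μfull x y x)
      _ ≤ |y - μn x| + c/2 := by
          have : |μn x - μfull x y x| ≤ c/2 := by rwa [abs_sub_comm] at h1
          linarith
  have e2 : |Ys i - μn (Xs i)| ≤ |Ys i - μfull x y (Xs i)| + c/2 := by
    calc |Ys i - μn (Xs i)| ≤ |Ys i - μfull x y (Xs i)| + |μfull x y (Xs i) - μn (Xs i)| := by
          simpa using abs_sub_le (Ys i) (μfull x y (Xs i)) (μn (Xs i))
      _ ≤ _ := by linarith
  linarith
end
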